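/- Let L1, L2, L3 be Lagrangian subspaces of H. There exists a unique bilinear form ⟨·,·⟩ on the quotient space W(L1, L2, L3) such that ⟨[a1], [b2 + b3]⟩ = ω(a1, b2) whenever a1 ∈ L1 ∩ (L2 + L3), b2 ∈ L2, b3 ∈ L3 and b2 + b3 ∈ L1. Moreover, this bilinear form is symmetric: ⟨w, w'⟩ = ⟨w', w⟩ for all w, w' ∈ W(L1, L2, L3). (This is the Maslov form associated with the Lagrangian subspaces L1, L2, L3.) -/

import Mathlib

set_option maxHeartbeats 1000000

/-- For Lagrangian subspaces `L1, L2, L3` of a finite-dimensional real vector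
space `H` with antisymmetric bilinear form `ω`, there is a unique bilinear form on
`W(L1, L2, L3) = (L1 ∩ (L2 + L3)) / ((L1 ∩ L2) + (L1 ∩ L3))` satisfying
`⟨[a1], [b2 + b3]⟩ = ω a1 b2` whenever `a1 ∈ L1 ∩ (L2 + L3)`, `b2 ∈ L2`, `b3 ∈ L3` and
`b2 + b3 ∈ L1`; moreover this bilinear form is symmetric (the Maslov form). -/
theorem maslov_form_exists_unique_and_symm
    {H : Type*} [AddCommGroup H] [Module ℝ H] [FiniteDimensional ℝ H]
    (ω : LinearMap.BilinForm ℝ H)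
    (hanti : ∀ x y : H, ω x y = -ω y x)
    (L1 L2 L3 : Submodule ℝ H)
    (h1 : L1 = LinearMap.BilinForm.orthogonal ω L1)
    (h2 : L2 = LinearMap.BilinForm.orthogonal ω L2)
    (h3 : L3 = LinearMap.BilinForm.orthogonal ω L3) :
    (∃! β : LinearMap.BilinForm ℝ
        (↥(L1 ⊓ (L2 ⊔ L3)) ⧸
          Submodule.comap (L1 ⊓ (L2 ⊔ L3)).subtype ((L1 ⊓ L2) ⊔ (L1 ⊓ L3))),
      ∀ (a1 : H) (ha1 : a1 ∈ L1 ⊓ (L2 ⊔ L3)) (b2 b3 : H) (hb2 : b2 ∈ L2) (hb3 : b3 ∈ L3)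
        (hb1 : b2 + b3 ∈ L1),
        β (Submodule.Quotient.mk ⟨a1, ha1⟩)
            (Submodule.Quotient.mk
              ⟨b2 + b3, Submodule.mem_inf.mpr ⟨hb1, Submodule.add_mem_sup hb2 hb3⟩⟩) =
          ω a1 b2) ∧
    ∀ β : LinearMap.BilinForm ℝ
        (↥(L1 ⊓ (L2 ⊔ L3)) ⧸
          Submodule.comap (L1 ⊓ (L2 ⊔ L3)).subtype ((L1 ⊓ L2) ⊔ (L1 ⊓ L3))),
      (∀ (a1 : H) (ha1 : a1 ∈ L1 ⊓ (L2 ⊔ L3)) (b2 b3 : H) (hb2 : b2 ∈ L2) (hb3 : b3 ∈ L3)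
        (hb1 : b2 + b3 ∈ L1),
        β (Submodule.Quotient.mk ⟨a1, ha1⟩)
            (Submodule.Quotient.mk
              ⟨b2 + b3, Submodule.mem_inf.mpr ⟨hb1, Submodule.add_mem_sup hb2 hb3⟩⟩) =
          ω a1 b2) →
      ∀ w w', β w w' = β w' w := by
  classical
  -- ω vanishes on each Lagrangian
  have hzero : ∀ (L : Submodule ℝ H), L = LinearMap.BilinForm.orthogonal ω L →
      ∀ x ∈ L, ∀ y ∈ L, ω x y = 0 := by
    intro L hL x hx y hy
    rw [hL] at hy
    exact hy x hx
  -- the value ω a b2 only depends on b2 + b3, for a ∈ L2 ⊔ L3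
  have huniq : ∀ a ∈ L2 ⊔ L3, ∀ b2 ∈ L2, ∀ b3 ∈ L3, ∀ b2' ∈ L2, ∀ b3' ∈ L3,
      b2 + b3 = b2' + b3' → ω a b2 = ω a b2' := by
    intro a ha b2 hb2 b3 hb3 b2' hb2' b3' hb3' heq
    obtain ⟨a2, ha2, a3, ha3, rfl⟩ := Submodule.mem_sup.mp ha
    have hc2 : b2 - b2' ∈ L2 := sub_mem hb2 hb2'
    have hceq : b2 - b2' = b3' - b3 := by
      rw [sub_eq_sub_iff_add_eq_add, heq]; exact add_comm _ _
    have hc3 : b2 - b2' ∈ L3 := hceq ▸ sub_mem hb3' hb3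
    have e2 : ω a2 (b2 - b2') = 0 := hzero L2 h2 a2 ha2 _ hc2
    have e3 : ω a3 (b2 - b2') = 0 := hzero L3 h3 a3 ha3 _ hc3
    simp only [map_add, map_sub, LinearMap.add_apply, LinearMap.sub_apply] at e2 e3 ⊢
    linarith
  -- construct a linear choice of the `L2`-component on `L2 ⊔ L3`
  set L2' := L2.comap (L2 ⊔ L3).subtype with hL2'
  set L3' := L3.comap (L2 ⊔ L3).subtype with hL3'
  obtain ⟨D, hD⟩ := Submodule.exists_isCompl (L3'.comap L2'.subtype)
  set C : Submodule ℝ ↥(L2 ⊔ L3) := D.map L2'.subtype with hCdef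
  have hCle : C ≤ L2' := by
    rintro x ⟨d, hd, rfl⟩
    exact (d : ↥L2').2
  have hsup : L2' ⊔ L3' = ⊤ := by
    rw [eq_top_iff]
    rintro ⟨x, hx⟩ -
    obtain ⟨y, hy, z, hz, rfl⟩ := Submodule.mem_sup.mp hx
    exact Submodule.mem_sup.mpr
      ⟨⟨y, Submodule.mem_sup_left hy⟩, hy, ⟨z, Submodule.mem_sup_right hz⟩, hz, rfl⟩
  have hcompl : IsCompl C L3' := by
    constructor
    · rw [disjoint_iff_inf_le]
      intro x hx
      obtain ⟨hxC, hx3⟩ := Submodule.mem_inf.mp hx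
      obtain ⟨d, hd, rfl⟩ := hxC
      have hd' : d ∈ L3'.comap L2'.subtype := hx3
      have hd0 : d = 0 := by
        have := hD.disjoint.le_bot (Submodule.mem_inf.mpr ⟨hd', hd⟩)
        simpa using this
      simp [hd0]
    · rw [codisjoint_iff_le_sup]
      intro x _
      have hx : x ∈ L2' ⊔ L3' := by rw [hsup]; trivial
      obtain ⟨y, hy, z, hz, rfl⟩ := Submodule.mem_sup.mp hx
      have hy' : (⟨y, hy⟩ : ↥L2') ∈ D ⊔ L3'.comap L2'.subtype := by
        rw [hD.symm.sup_eq_top]; trivial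
      obtain ⟨d, hdD, e, he, hde⟩ := Submodule.mem_sup.mp hy'
      refine Submodule.mem_sup.mpr
        ⟨L2'.subtype d, ⟨d, hdD, rfl⟩, L2'.subtype e + z,
          add_mem (Submodule.mem_comap.mp he) hz, ?_⟩
      have hsum : L2'.subtype d + L2'.subtype e = y := by
        rw [← map_add, hde]; rfl
      rw [← add_assoc, hsum]
  set π := C.projectionOnto L3' hcompl with hπ
  have hsub : ∀ x : ↥(L2 ⊔ L3), x - (π x : ↥(L2 ⊔ L3)) ∈ L3' := by
    intro x
    have hx : x ∈ C ⊔ L3' := by rw [hcompl.sup_eq_top]; trivial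
    obtain ⟨y, hy, z, hz, rfl⟩ := Submodule.mem_sup.mp hx
    have hπval : π (y + z) = ⟨y, hy⟩ := by
      rw [map_add, Submodule.projectionOnto_apply_of_mem_right hcompl hz, add_zero]
      exact Submodule.projectionOnto_apply_left hcompl ⟨y, hy⟩
    rw [hπval]
    simpa using hz
  set rH : ↥(L1 ⊓ (L2 ⊔ L3)) →ₗ[ℝ] H :=
    (L2 ⊔ L3).subtype ∘ₗ C.subtype ∘ₗ π ∘ₗ
      Submodule.inclusion (inf_le_right : L1 ⊓ (L2 ⊔ L3) ≤ L2 ⊔ L3) with hrH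
  have hr2 : ∀ s : ↥(L1 ⊓ (L2 ⊔ L3)), rH s ∈ L2 := by
    intro s
    exact hCle (π (Submodule.inclusion inf_le_right s)).2
  have hr3 : ∀ s : ↥(L1 ⊓ (L2 ⊔ L3)), (s : H) - rH s ∈ L3 := by
    intro s
    have h := hsub (Submodule.inclusion (inf_le_right : L1 ⊓ (L2 ⊔ L3) ≤ L2 ⊔ L3) s)
    rw [hL3', Submodule.mem_comap] at h
    simpa [hrH] using h
  set B : LinearMap.BilinForm ℝ ↥(L1 ⊓ (L2 ⊔ L3)) :=
    ω.compl₁₂ (L1 ⊓ (L2 ⊔ L3)).subtype rH with hB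
  have hBapp : ∀ a b : ↥(L1 ⊓ (L2 ⊔ L3)), B a b = ω a (rH b) := fun a b => rfl
  have hBval : ∀ (a b : ↥(L1 ⊓ (L2 ⊔ L3))) (b2 b3 : H), b2 ∈ L2 → b3 ∈ L3 →
      (b : H) = b2 + b3 → B a b = ω a b2 := by
    intro a b b2 b3 hb2 hb3 hb
    rw [hBapp]
    exact huniq a (Submodule.mem_inf.mp a.2).2 (rH b) (hr2 b) ((b : H) - rH b) (hr3 b)
      b2 hb2 b3 hb3 (by rw [← hb]; abel)
  have hK2 : ∀ (a k : ↥(L1 ⊓ (L2 ⊔ L3))), (k : H) ∈ (L1 ⊓ L2) ⊔ (L1 ⊓ L3) → B a k = 0 := by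
    intro a k hk
    obtain ⟨k2, hk2, k3, hk3, hks⟩ := Submodule.mem_sup.mp hk
    rw [hBval a k k2 k3 (Submodule.mem_inf.mp hk2).2 (Submodule.mem_inf.mp hk3).2 hks.symm]
    exact hzero L1 h1 a (Submodule.mem_inf.mp a.2).1 k2 (Submodule.mem_inf.mp hk2).1
  have hK1 : ∀ k : ↥(L1 ⊓ (L2 ⊔ L3)), (k : H) ∈ (L1 ⊓ L2) ⊔ (L1 ⊓ L3) →
      ∀ b : ↥(L1 ⊓ (L2 ⊔ L3)), B k b = 0 := by
    intro k hk b
    obtain ⟨k2, hk2, k3, hk3, hks⟩ := Submodule.mem_sup.mp hk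
    rw [hBapp]
    have e2 : ω k2 (rH b) = 0 :=
      hzero L2 h2 k2 (Submodule.mem_inf.mp hk2).2 _ (hr2 b)
    have e3 : ω k3 (rH b) = 0 := by
      have ea : ω k3 (b : H) = 0 :=
        hzero L1 h1 k3 (Submodule.mem_inf.mp hk3).1 _ (Submodule.mem_inf.mp b.2).1
      have eb : ω k3 ((b : H) - rH b) = 0 :=
        hzero L3 h3 k3 (Submodule.mem_inf.mp hk3).2 _ (hr3 b)
      simp only [map_sub] at eb
      linarith
    rw [hks.symm]
    simp only [map_add, LinearMap.add_apply]
    rw [e2, e3]; ring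
  have hker : ∀ a : ↥(L1 ⊓ (L2 ⊔ L3)),
      Submodule.comap (L1 ⊓ (L2 ⊔ L3)).subtype ((L1 ⊓ L2) ⊔ (L1 ⊓ L3)) ≤
        LinearMap.ker (B a) := fun a k hkK => hK2 a k hkK
  set B1 : ↥(L1 ⊓ (L2 ⊔ L3)) →ₗ[ℝ]
      (↥(L1 ⊓ (L2 ⊔ L3)) ⧸
        Submodule.comap (L1 ⊓ (L2 ⊔ L3)).subtype ((L1 ⊓ L2) ⊔ (L1 ⊓ L3))) →ₗ[ℝ] ℝ :=
    { toFun := fun a =>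
        (Submodule.comap (L1 ⊓ (L2 ⊔ L3)).subtype ((L1 ⊓ L2) ⊔ (L1 ⊓ L3))).liftQ (B a) (hker a)
      map_add' := by
        intro x y
        refine LinearMap.ext fun w => ?_
        obtain ⟨b, rfl⟩ := Submodule.mkQ_surjective _ w
        simp [Submodule.liftQ_apply]
      map_smul' := by
        intro c x
        refine LinearMap.ext fun w => ?_
        obtain ⟨b, rfl⟩ := Submodule.mkQ_surjective _ w
        simp [Submodule.liftQ_apply] } with hB1
  have hker1 : Submodule.comap (L1 ⊓ (L2 ⊔ L3)).subtype ((L1 ⊓ L2) ⊔ (L1 ⊓ L3)) ≤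
      LinearMap.ker B1 := by
    intro k hkK
    rw [LinearMap.mem_ker]
    refine LinearMap.ext fun w => ?_
    obtain ⟨b, rfl⟩ := Submodule.mkQ_surjective _ w
    simp only [hB1, LinearMap.coe_mk, AddHom.coe_mk, Submodule.mkQ_apply,
      Submodule.liftQ_apply, LinearMap.zero_apply]
    exact hK1 k hkK b
  set β0 : LinearMap.BilinForm ℝ
      (↥(L1 ⊓ (L2 ⊔ L3)) ⧸
        Submodule.comap (L1 ⊓ (L2 ⊔ L3)).subtype ((L1 ⊓ L2) ⊔ (L1 ⊓ L3))) :=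
    (Submodule.comap (L1 ⊓ (L2 ⊔ L3)).subtype ((L1 ⊓ L2) ⊔ (L1 ⊓ L3))).liftQ B1 hker1
    with hβ0
  have hβ0app : ∀ a b : ↥(L1 ⊓ (L2 ⊔ L3)),
      β0 (Submodule.Quotient.mk a) (Submodule.Quotient.mk b) = B a b := by
    intro a b
    simp [hβ0, hB1, Submodule.liftQ_apply]
  have hprop : ∀ (a1 : H) (ha1 : a1 ∈ L1 ⊓ (L2 ⊔ L3)) (b2 b3 : H) (hb2 : b2 ∈ L2)
      (hb3 : b3 ∈ L3) (hb1 : b2 + b3 ∈ L1),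
      β0 (Submodule.Quotient.mk ⟨a1, ha1⟩)
          (Submodule.Quotient.mk
            ⟨b2 + b3, Submodule.mem_inf.mpr ⟨hb1, Submodule.add_mem_sup hb2 hb3⟩⟩) =
        ω a1 b2 := by
    intro a1 ha1 b2 b3 hb2 hb3 hb1
    rw [hβ0app]
    exact hBval _ _ b2 b3 hb2 hb3 rfl
  -- any bilinear form satisfying the property has determined values
  have hval : ∀ β : LinearMap.BilinForm ℝ
      (↥(L1 ⊓ (L2 ⊔ L3)) ⧸
        Submodule.comap (L1 ⊓ (L2 ⊔ L3)).subtype ((L1 ⊓ L2) ⊔ (L1 ⊓ L3))),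
      (∀ (a1 : H) (ha1 : a1 ∈ L1 ⊓ (L2 ⊔ L3)) (b2 b3 : H) (hb2 : b2 ∈ L2) (hb3 : b3 ∈ L3)
        (hb1 : b2 + b3 ∈ L1),
        β (Submodule.Quotient.mk ⟨a1, ha1⟩)
            (Submodule.Quotient.mk
              ⟨b2 + b3, Submodule.mem_inf.mpr ⟨hb1, Submodule.add_mem_sup hb2 hb3⟩⟩) =
          ω a1 b2) →
      ∀ (a b : ↥(L1 ⊓ (L2 ⊔ L3))) (b2 b3 : H), b2 ∈ L2 → b3 ∈ L3 → (b : H) = b2 + b3 →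
        β (Submodule.Quotient.mk a) (Submodule.Quotient.mk b) = ω a b2 := by
    intro β hβ a b b2 b3 hb2 hb3 hb
    have hb1 : b2 + b3 ∈ L1 := hb ▸ (Submodule.mem_inf.mp b.2).1
    have hbeq : b = (⟨b2 + b3,
        Submodule.mem_inf.mpr ⟨hb1, Submodule.add_mem_sup hb2 hb3⟩⟩ :
          ↥(L1 ⊓ (L2 ⊔ L3))) := Subtype.ext hb
    rw [hbeq]
    exact hβ (a : H) a.2 b2 b3 hb2 hb3 hb1
  refine ⟨⟨β0, hprop, ?_⟩, ?_⟩
  · -- uniqueness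
    intro β hβ
    refine LinearMap.ext fun w => LinearMap.ext fun w' => ?_
    obtain ⟨a, rfl⟩ := Submodule.mkQ_surjective _ w
    obtain ⟨b, rfl⟩ := Submodule.mkQ_surjective _ w'
    obtain ⟨b2, hb2, b3, hb3, hbs⟩ := Submodule.mem_sup.mp (Submodule.mem_inf.mp b.2).2
    simp only [Submodule.mkQ_apply]
    rw [hval β hβ a b b2 b3 hb2 hb3 hbs.symm, hval β0 hprop a b b2 b3 hb2 hb3 hbs.symm]
  · -- symmetry
    intro β hβ w w'
    obtain ⟨a, rfl⟩ := Submodule.mkQ_surjective _ w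
    obtain ⟨b, rfl⟩ := Submodule.mkQ_surjective _ w'
    obtain ⟨a2, ha2, a3, ha3, has⟩ := Submodule.mem_sup.mp (Submodule.mem_inf.mp a.2).2
    obtain ⟨b2, hb2, b3, hb3, hbs⟩ := Submodule.mem_sup.mp (Submodule.mem_inf.mp b.2).2
    simp only [Submodule.mkQ_apply]
    rw [hval β hβ a b b2 b3 hb2 hb3 hbs.symm, hval β hβ b a a2 a3 ha2 ha3 has.symm]
    have hz0 : ω (a : H) (b : H) = 0 :=
      hzero L1 h1 _ (Submodule.mem_inf.mp a.2).1 _ (Submodule.mem_inf.mp b.2).1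
    have e22 : ω a2 b2 = 0 := hzero L2 h2 a2 ha2 b2 hb2
    have e33 : ω a3 b3 = 0 := hzero L3 h3 a3 ha3 b3 hb3
    rw [← has, ← hbs] at hz0
    rw [← has, ← hbs]
    simp only [map_add, LinearMap.add_apply] at hz0 ⊢
    linarith [hanti b2 a2, hanti b3 a2, hanti a2 b3]
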